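/- Let q be a prime power, F the finite field with q elements, and K a field extension of F with q² elements. Let S ⊆ K be a finite subset that contains no conjugate pair. Let E ⊆ F^S be the F-span of the five vectors (1)_{x∈S}, (x^q + x)_{x∈S}, ((x^q + x)²)_{x∈S}, (x^{q+1})_{x∈S}, and (x^{2(q+1)})_{x∈S} (all of whose entries lie in F). Then every nonzero vector of the Euclidean dual E^⊥ ⊆ F^S has Hamming weight at least 4. -/
import Mathlib


/-- The Euclidean dual of a linear code `C ⊆ F^ι`. -/
noncomputable def dualCode {F : Type*} [Field F] {ι : Type*} [Fintype ι]
    (C : Submodule F (ι → F)) : Submodule F (ι → F) where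
  carrier := {u | ∀ v ∈ C, ∑ i, u i * v i = 0}
  add_mem' := by
    intro a b ha hb v hv
    have h : ∑ i, (a i + b i) * v i = (∑ i, a i * v i) + ∑ i, b i * v i := by
      rw [← Finset.sum_add_distrib]
      exact Finset.sum_congr rfl fun i _ => add_mul _ _ _
    simp [h, ha v hv, hb v hv]
  zero_mem' := by
    intro v hv
    simp
  smul_mem' := by
    intro c a ha v hv
    have h : ∑ i, (c * a i) * v i = c * ∑ i, a i * v i := by
      rw [Finset.mul_sum]
      exact Finset.sum_congr rfl fun i _ => mul_assoc _ _ _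
    simp [smul_eq_mul, h, ha v hv]

/-- The minimum distance of a linear code: the least Hamming weight of a
nonzero codeword. -/
noncomputable def minDist {F : Type*} [Field F] [DecidableEq F] {ι : Type*} [Fintype ι]
    (C : Submodule F (ι → F)) : ℕ :=
  sInf {w | ∃ v ∈ C, v ≠ 0 ∧ hammingNorm v = w}

/-- Let `q` be a prime power, `F = F_q`, `K = F_{q²}`, and `S ⊆ K` a finite subset
containing no conjugate pair.  Let `E ⊆ F^S` be the `F`-span of the five vectors
`(1)_{x∈S}`, `(x^q + x)_{x∈S}`, `((x^q + x)²)_{x∈S}`, `(x^{q+1})_{x∈S}` and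
`(x^{2(q+1)})_{x∈S}` (whose entries lie in `F`, witnessed by `τ, ν : K → F`).
Then every nonzero vector of the Euclidean dual `E^⊥` has Hamming weight at
least `4`. -/
theorem statement8 {q : ℕ} (hq : ∃ p e : ℕ, p.Prime ∧ 0 < e ∧ q = p ^ e)
    (F K : Type*) [Field F] [Fintype F] [DecidableEq F]
    [Field K] [Fintype K] [Algebra F K]
    (hF : Fintype.card F = q) (hK : Fintype.card K = q ^ 2)
    (S : Finset K) (hS : ∀ x ∈ S, ∀ y ∈ S, x ≠ y → y ≠ x ^ q)
    (τ ν : K → F)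
    (hτ : ∀ x : K, algebraMap F K (τ x) = x ^ q + x)
    (hν : ∀ x : K, algebraMap F K (ν x) = x ^ (q + 1))
    (E : Submodule F (S → F))
    (hE : E = Submodule.span F
      ({fun _ => 1, fun x : S => τ (x : K), fun x : S => (τ (x : K)) ^ 2,
        fun x : S => ν (x : K), fun x : S => (ν (x : K)) ^ 2} : Set (S → F))) :
    ∀ u ∈ dualCode E, u ≠ 0 → 4 ≤ hammingNorm u := by
  subst hE
  intro u hu hne
  by_contra hlt
  push_neg at hlt
  classical
  -- injectivity of x ↦ (τ x, ν x) on S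
  have hinj : ∀ i j : S, τ (i : K) = τ (j : K) → ν (i : K) = ν (j : K) → i = j := by
    intro i j ht hn
    by_contra hij
    have hXY : (i : K) ≠ (j : K) := fun h => hij (Subtype.ext h)
    have h1 : (i : K) ^ q + (i : K) = (j : K) ^ q + (j : K) := by
      rw [← hτ, ← hτ, ht]
    have h2 : (i : K) ^ q * (i : K) = (j : K) ^ q * (j : K) := by
      have := hν (i : K); rw [hn, hν] at this
      rw [pow_succ, pow_succ] at this
      exact this.symm
    have h3 : ((j : K) - (i : K)) * ((j : K) - (i : K) ^ q) = 0 := by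
      linear_combination (-(j : K)) * h1 + h2
    rcases mul_eq_zero.mp h3 with h | h
    · exact hXY (sub_eq_zero.mp h).symm
    · exact hS (i : K) i.2 (j : K) j.2 hXY (sub_eq_zero.mp h)
  set T : Finset S := Finset.univ.filter (fun i => u i ≠ 0) with hT
  have hmemT : ∀ i : S, i ∈ T ↔ u i ≠ 0 := by intro i; simp [hT]
  have hnorm : hammingNorm u = T.card := rfl
  have hrestrict : ∀ v : S → F, (∑ i ∈ T, u i * v i) = ∑ i, u i * v i := by
    intro v
    apply Finset.sum_subset (Finset.subset_univ T)
    intro i _ hi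
    have hz : u i = 0 := not_not.mp (fun h => hi ((hmemT i).mpr h))
    simp [hz]
  have E0 : ∑ i ∈ T, u i * 1 = 0 :=
    (hrestrict (fun _ => 1)).trans (hu _ (Submodule.subset_span (by simp)))
  have E1 : ∑ i ∈ T, u i * τ (i : K) = 0 :=
    (hrestrict (fun x : S => τ (x : K))).trans (hu _ (Submodule.subset_span (by simp)))
  have E2 : ∑ i ∈ T, u i * (τ (i : K)) ^ 2 = 0 :=
    (hrestrict (fun x : S => (τ (x : K)) ^ 2)).trans (hu _ (Submodule.subset_span (by simp)))
  have E3 : ∑ i ∈ T, u i * ν (i : K) = 0 :=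
    (hrestrict (fun x : S => ν (x : K))).trans (hu _ (Submodule.subset_span (by simp)))
  have E4 : ∑ i ∈ T, u i * (ν (i : K)) ^ 2 = 0 :=
    (hrestrict (fun x : S => (ν (x : K)) ^ 2)).trans (hu _ (Submodule.subset_span (by simp)))
  have hTpos : 0 < T.card := Finset.card_pos.mpr (by
    obtain ⟨i, hi⟩ := Function.ne_iff.mp hne
    exact ⟨i, (hmemT i).mpr hi⟩)
  have hc : T.card = 1 ∨ T.card = 2 ∨ T.card = 3 := by omega
  rcases hc with h | h | h
  · obtain ⟨i, hTi⟩ := Finset.card_eq_one.mp h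
    rw [hTi, Finset.sum_singleton] at E0
    have ha : u i ≠ 0 := (hmemT i).mp (by rw [hTi]; exact Finset.mem_singleton_self i)
    exact ha (by simpa using E0)
  · obtain ⟨i, j, hij, hTij⟩ := Finset.card_eq_two.mp h
    have ha : u i ≠ 0 := (hmemT i).mp (by rw [hTij]; simp)
    rw [hTij, Finset.sum_pair hij] at E0 E1 E3
    have h1 : u i * (τ (i : K) - τ (j : K)) = 0 := by
      linear_combination E1 - τ (j : K) * E0
    have h2 : u i * (ν (i : K) - ν (j : K)) = 0 := by
      linear_combination E3 - ν (j : K) * E0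
    have ht : τ (i : K) = τ (j : K) :=
      sub_eq_zero.mp ((mul_eq_zero.mp h1).resolve_left ha)
    have hn : ν (i : K) = ν (j : K) :=
      sub_eq_zero.mp ((mul_eq_zero.mp h2).resolve_left ha)
    exact hij (hinj i j ht hn)
  · obtain ⟨i, j, k, hij, hik, hjk, hTijk⟩ := Finset.card_eq_three.mp h
    have ha : u i ≠ 0 := (hmemT i).mp (by rw [hTijk]; simp)
    have hb : u j ≠ 0 := (hmemT j).mp (by rw [hTijk]; simp)
    have hcc : u k ≠ 0 := (hmemT k).mp (by rw [hTijk]; simp)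
    have hnotmem1 : i ∉ ({j, k} : Finset S) := by simp [hij, hik]
    have hnotmem2 : j ∉ ({k} : Finset S) := by simp [hjk]
    rw [hTijk, Finset.sum_insert hnotmem1, Finset.sum_insert hnotmem2,
      Finset.sum_singleton] at E0 E1 E2 E3 E4
    have hA : u i * ((τ (i : K) - τ (j : K)) * (τ (i : K) - τ (k : K))) = 0 := by
      linear_combination E2 - (τ (j : K) + τ (k : K)) * E1 + (τ (j : K) * τ (k : K)) * E0
    have hB : u j * ((τ (j : K) - τ (i : K)) * (τ (j : K) - τ (k : K))) = 0 := by
      linear_combination E2 - (τ (i : K) + τ (k : K)) * E1 + (τ (i : K) * τ (k : K)) * E0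
    have hC : u k * ((τ (k : K) - τ (i : K)) * (τ (k : K) - τ (j : K))) = 0 := by
      linear_combination E2 - (τ (i : K) + τ (j : K)) * E1 + (τ (i : K) * τ (j : K)) * E0
    have hAor : τ (i : K) = τ (j : K) ∨ τ (i : K) = τ (k : K) :=
      ((mul_eq_zero.mp ((mul_eq_zero.mp hA).resolve_left ha)).imp
        sub_eq_zero.mp sub_eq_zero.mp)
    have hBor : τ (j : K) = τ (i : K) ∨ τ (j : K) = τ (k : K) :=
      ((mul_eq_zero.mp ((mul_eq_zero.mp hB).resolve_left hb)).imp
        sub_eq_zero.mp sub_eq_zero.mp)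
    have hCor : τ (k : K) = τ (i : K) ∨ τ (k : K) = τ (j : K) :=
      ((mul_eq_zero.mp ((mul_eq_zero.mp hC).resolve_left hcc)).imp
        sub_eq_zero.mp sub_eq_zero.mp)
    have hteq : τ (i : K) = τ (j : K) ∧ τ (i : K) = τ (k : K) := by
      rcases hAor with h1 | h1
      · rcases hCor with h2 | h2
        · exact ⟨h1, h2.symm⟩
        · exact ⟨h1, h1.trans h2.symm⟩
      · rcases hBor with h2 | h2
        · exact ⟨h2.symm, h1⟩
        · exact ⟨h2.trans h1.symm |>.symm ▸ (h1.trans h2.symm).symm ▸ (h1.trans h2.symm), h1⟩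
    have hn12 : ν (i : K) ≠ ν (j : K) := fun hn => hij (hinj i j hteq.1 hn)
    have hn13 : ν (i : K) ≠ ν (k : K) := fun hn => hik (hinj i k hteq.2 hn)
    have hA2 : u i * ((ν (i : K) - ν (j : K)) * (ν (i : K) - ν (k : K))) = 0 := by
      linear_combination E4 - (ν (j : K) + ν (k : K)) * E3 + (ν (j : K) * ν (k : K)) * E0
    rcases mul_eq_zero.mp ((mul_eq_zero.mp hA2).resolve_left ha) with h' | h'
    · exact hn12 (sub_eq_zero.mp h')
    · exact hn13 (sub_eq_zero.mp h')
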